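/- Let θ ∈ (0, π/2) and v ∈ ℂ, and let v̄ denote the complex conjugate of v. The 2×2 complex matrix f_D(v) = [[sin θ·(v + v̄), cos θ·(v − v̄)],[cos θ·(v̄ − v), sin θ·(v + v̄)]] is Hermitian, and f_D(v) is negative definite if and only if Re v < 0 and cos θ·|Im v| < sin θ·|Re v|, i.e., if and only if v lies in the open conic sector D_θ with apex at the origin and inner angle 2θ. -/

import Mathlib

open Matrix
open scoped ComplexOrder

/-- The characteristic function of the conic LMI region with apex at the origin and
inner angle `2θ`:
`f_D(v) = [[sin θ·(v + v̄), cos θ·(v − v̄)],[cos θ·(v̄ − v), sin θ·(v + v̄)]]`. -/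
noncomputable def fD (θ : ℝ) (v : ℂ) : Matrix (Fin 2) (Fin 2) ℂ :=
  !![(Real.sin θ : ℂ) * (v + starRingEnd ℂ v), (Real.cos θ : ℂ) * (v - starRingEnd ℂ v);
     (Real.cos θ : ℂ) * (starRingEnd ℂ v - v), (Real.sin θ : ℂ) * (v + starRingEnd ℂ v)]

/-- The quadratic form of `-(fD θ v)` at a vector `x`, as a real number. -/
lemma fD_quad (θ : ℝ) (v : ℂ) (x : Fin 2 → ℂ) :
    dotProduct (star x) ((-(fD θ v)) *ᵥ x) =
      ((-(2*Real.sin θ*v.re)*(Complex.normSq (x 0) + Complex.normSq (x 1))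
        + 2*(2*Real.cos θ*v.im)*((starRingEnd ℂ (x 0) * x 1).im) : ℝ) : ℂ) := by
  simp [fD, mulVec, dotProduct, Fin.sum_univ_two, Complex.ext_iff, Complex.normSq_apply]
  constructor <;> ring

/-- `fD θ v` is Hermitian. -/
lemma fD_isHermitian (θ : ℝ) (v : ℂ) : (fD θ v).IsHermitian := by
  rw [Matrix.IsHermitian]
  ext i j
  fin_cases i <;> fin_cases j <;>
    simp [fD, Matrix.conjTranspose_apply, Complex.ext_iff] <;> ring

/-- For `θ ∈ (0, π/2)` and `v ∈ ℂ`, the matrix `f_D(v)` is Hermitian, and it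
is negative definite iff `Re v < 0` and `cos θ·|Im v| < sin θ·|Re v|`, i.e. iff `v` lies in
the open conic sector `D_θ` with apex at the origin and inner angle `2θ`. -/
theorem stmt_9 (θ : ℝ) (hθ₁ : 0 < θ) (hθ₂ : θ < Real.pi / 2) (v : ℂ) :
    (fD θ v).IsHermitian ∧
    ((-(fD θ v)).PosDef ↔ v.re < 0 ∧ Real.cos θ * |v.im| < Real.sin θ * |v.re|) := by
  have hs : 0 < Real.sin θ :=
    Real.sin_pos_of_pos_of_lt_pi hθ₁ (lt_trans hθ₂ (by linarith [Real.pi_pos]))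
  have hc : 0 < Real.cos θ := Real.cos_pos_of_mem_Ioo ⟨by linarith [Real.pi_pos], hθ₂⟩
  refine ⟨fD_isHermitian θ v, ?_, ?_⟩
  · intro h
    -- test vector ![1, 0] gives `Re v < 0`
    have h1 := h.dotProduct_mulVec_pos (x := ![1, 0]) (by intro hx; have := congrFun hx 0; simp at this)
    rw [fD_quad, Complex.zero_lt_real] at h1
    simp at h1
    have hr : v.re < 0 := by nlinarith
    -- test vector ![1, I·t] with `t = -sign (Im v)` gives the angle condition
    set t : ℝ := if 0 ≤ v.im then -1 else 1 with ht
    have h2 := h.dotProduct_mulVec_pos (x := ![1, Complex.I * (t:ℂ)])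
      (by intro hx; have := congrFun hx 0; simp at this)
    rw [fD_quad, Complex.zero_lt_real] at h2
    simp [Complex.normSq_apply] at h2
    have ht2 : t * t = 1 := by rw [ht]; split <;> norm_num
    have hbt : v.im * t = -|v.im| := by
      rw [ht]; split <;> rename_i hb
      · rw [abs_of_nonneg hb]; ring
      · rw [abs_of_neg (lt_of_not_ge hb)]; ring
    refine ⟨hr, ?_⟩
    rw [abs_of_neg hr]
    nlinarith
  · rintro ⟨hr, hlt⟩
    refine Matrix.PosDef.of_dotProduct_mulVec_pos (fD_isHermitian θ v).neg (fun x hx => ?_)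
    rw [fD_quad, Complex.zero_lt_real]
    set n0 := Complex.normSq (x 0) with hn0
    set n1 := Complex.normSq (x 1) with hn1
    have hn0' : 0 ≤ n0 := Complex.normSq_nonneg _
    have hn1' : 0 ≤ n1 := Complex.normSq_nonneg _
    have hnpos : 0 < n0 + n1 := by
      rcases lt_or_ge 0 (n0 + n1) with h | h
      · exact h
      · exfalso; apply hx
        have e0 : n0 = 0 := le_antisymm (by linarith) hn0'
        have e1 : n1 = 0 := le_antisymm (by linarith) hn1'
        funext i; fin_cases i
        · simpa using Complex.normSq_eq_zero.mp e0
        · simpa using Complex.normSq_eq_zero.mp e1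
    set z := (starRingEnd ℂ (x 0) * x 1).im with hz
    have hz2 : z ^ 2 ≤ n0 * n1 := by
      have := Complex.normSq_mul (starRingEnd ℂ (x 0)) (x 1)
      rw [Complex.normSq_conj] at this
      have h2 := Complex.normSq_apply (starRingEnd ℂ (x 0) * x 1)
      nlinarith [sq_nonneg (starRingEnd ℂ (x 0) * x 1).re]
    have hb2 : (2*Real.cos θ*v.im)^2 < (2*Real.sin θ*v.re)^2 := by
      have h1 : Real.cos θ * |v.im| < Real.sin θ * (-v.re) := by
        rwa [abs_of_neg hr] at hlt
      have h2 : (Real.cos θ * |v.im|)^2 < (Real.sin θ * (-v.re))^2 := by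
        have := mul_nonneg hc.le (abs_nonneg v.im)
        nlinarith
      have e1 : (Real.cos θ * |v.im|)^2 = (Real.cos θ * v.im)^2 := by
        rw [mul_pow, mul_pow, sq_abs]
      nlinarith [e1, h2]
    have hA : 0 < -(2*Real.sin θ*v.re) := by nlinarith
    rcases eq_or_lt_of_le (mul_nonneg hn0' hn1') with hp | hp
    · have hz0 : z = 0 := by nlinarith [sq_nonneg z]
      rw [hz0]
      nlinarith
    · have key : (2*(2*Real.cos θ*v.im)*z)^2 < (-(2*Real.sin θ*v.re)*(n0+n1))^2 := by
        nlinarith [sq_nonneg (n0 - n1),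
          mul_le_mul_of_nonneg_left hz2 (sq_nonneg (2*Real.cos θ*v.im)),
          mul_lt_mul_of_pos_right hb2 hp, sq_nonneg z]
      nlinarith [mul_pos hA hnpos,
        sq_nonneg (-(2*Real.sin θ*v.re)*(n0+n1) + 2*(2*Real.cos θ*v.im)*z)]
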